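/- Let m > 0 be squarefree, p an odd prime with p ∣ m, and suppose there exists π in the ring of integers D of ℚ(√m) with |N(π)| = p. Let a, b ∈ ℤ with p ∣ a, p ∤ b, and set ξ = (a + b√m)/p. Then there exist γ, δ ∈ D with |N(ξγ − δ)| = 1/p, and in particular 0 < |N(ξγ − δ)| < 1. -/

import Mathlib

theorem dh_rat_int_of_sq {m n : ℤ} (hm : Squarefree m) (q : ℚ)
    (h : (m : ℚ) * q ^ 2 = (n : ℚ)) : ∃ z : ℤ, (z : ℚ) = q := by
  have hd : ((q.den : ℤ) : ℚ) ≠ 0 := by exact_mod_cast q.den_ne_zero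
  have hq : (q : ℚ) = (q.num : ℚ) / (q.den : ℚ) := (Rat.num_div_den q).symm
  have key : m * q.num ^ 2 = n * (q.den : ℤ) ^ 2 := by
    have : (m : ℚ) * (q.num : ℚ) ^ 2 = (n : ℚ) * ((q.den : ℤ) : ℚ) ^ 2 := by
      rw [hq] at h
      field_simp at h
      push_cast
      linear_combination h
    exact_mod_cast this
  have hcop : IsCoprime (q.num : ℤ) (q.den : ℤ) :=
    Int.isCoprime_iff_gcd_eq_one.mpr q.reduced
  have hdvd : ((q.den : ℤ)) ^ 2 ∣ m * q.num ^ 2 := ⟨n, by linarith [key]⟩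
  have hdvd2 : ((q.den : ℤ)) ^ 2 ∣ m :=
    (IsCoprime.pow (hcop.symm)).dvd_of_dvd_mul_right hdvd
  have hunit : IsUnit ((q.den : ℤ)) := hm _ (by rwa [← pow_two])
  have hden1 : (q.den : ℤ) = 1 := by
    rcases Int.isUnit_iff.mp hunit with h1 | h1
    · exact h1
    · exfalso; omega
  have hden1' : q.den = 1 := by exact_mod_cast hden1
  refine ⟨q.num, ?_⟩
  conv_rhs => rw [← Rat.num_div_den q]
  rw [hden1']
  norm_num

section DHAux
variable {m : ℤ} {K : Type*} [Field K] [NumberField K] {sqm : K}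
  (hsq : sqm ^ 2 = (m : K))
  (hdec : ∀ z : K, ∃ x y : ℚ, z = x + y * sqm)
  (hirr : ∀ q : ℚ, (q : K) ≠ sqm)

include hsq in
theorem dh_dec (hgen : Algebra.adjoin ℚ {sqm} = ⊤) (z : K) :
    ∃ x y : ℚ, z = x + y * sqm := by
  have hz : z ∈ Algebra.adjoin ℚ {sqm} := hgen ▸ Algebra.mem_top
  induction hz using Algebra.adjoin_induction with
  | mem u hu => exact ⟨0, 1, by simp [Set.mem_singleton_iff.mp hu]⟩
  | algebraMap r => exact ⟨r, 0, by simp [Algebra.algebraMap_eq_smul_one, Rat.smul_one_eq_cast]⟩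
  | add u v hu hv hu' hv' =>
      obtain ⟨x1, y1, rfl⟩ := hu'
      obtain ⟨x2, y2, rfl⟩ := hv'
      exact ⟨x1 + x2, y1 + y2, by push_cast; ring⟩
  | mul u v hu hv hu' hv' =>
      obtain ⟨x1, y1, rfl⟩ := hu'
      obtain ⟨x2, y2, rfl⟩ := hv'
      refine ⟨x1 * x2 + y1 * y2 * m, x1 * y2 + y1 * x2, ?_⟩
      push_cast
      ring_nf
      rw [hsq]
      ring

include hirr in
theorem dh_uniq {x y : ℚ} (h : (x : K) + y * sqm = 0) : x = 0 ∧ y = 0 := by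
  by_cases hy : y = 0
  · subst hy; simp at h; exact ⟨by exact_mod_cast h, rfl⟩
  · exfalso
    apply hirr (-x / y)
    have : (y : K) ≠ 0 := by exact_mod_cast hy
    push_cast
    field_simp
    linear_combination -h

noncomputable def dh_e : (Fin 2 → ℚ) →ₗ[ℚ] K where
  toFun v := v 0 + v 1 * sqm
  map_add' u v := by simp only [Pi.add_apply]; push_cast; ring
  map_smul' c v := by push_cast; simp [Rat.smul_def]; ring

include hdec hirr in
theorem dh_ebij : Function.Bijective (dh_e (sqm := sqm)) := by
  constructor
  · rw [injective_iff_map_eq_zero]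
    intro v hv
    simp only [dh_e, LinearMap.coe_mk, AddHom.coe_mk] at hv
    obtain ⟨h0, h1⟩ := dh_uniq hirr hv
    funext i; fin_cases i <;> assumption
  · intro z
    obtain ⟨x, y, rfl⟩ := hdec z
    exact ⟨![x, y], by simp [dh_e]⟩

noncomputable def dh_bas : Module.Basis (Fin 2) ℚ K :=
  Module.Basis.ofEquivFun (LinearEquiv.ofBijective _ (dh_ebij hdec hirr)).symm

theorem dh_bas_repr (x y : ℚ) :
    (dh_bas hdec hirr).repr ((x : K) + y * sqm) = Finsupp.equivFunOnFinite.symm ![x, y] := by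
  have : ((x : K) + y * sqm) = dh_e (sqm := sqm) ![x, y] := by simp [dh_e]
  rw [this]
  ext i
  rw [dh_bas, Module.Basis.ofEquivFun_repr_apply]
  have h2 : dh_e (sqm := sqm) ![x, y]
      = LinearEquiv.ofBijective _ (dh_ebij hdec hirr) ![x, y] := rfl
  rw [h2, LinearEquiv.symm_apply_apply]
  simp

theorem dh_bas_apply_zero : (dh_bas hdec hirr) 0 = 1 := by
  rw [dh_bas, Module.Basis.coe_ofEquivFun]
  simp [dh_e]

theorem dh_bas_apply_one : (dh_bas hdec hirr) 1 = sqm := by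
  rw [dh_bas, Module.Basis.coe_ofEquivFun]
  simp [dh_e]

include hsq hdec hirr in
theorem dh_leftMulMatrix (x y : ℚ) :
    Algebra.leftMulMatrix (dh_bas hdec hirr) ((x : K) + y * sqm)
      = !![x, m * y; y, x] := by
  ext i j
  rw [Algebra.leftMulMatrix_eq_repr_mul]
  fin_cases j <;> beta_reduce
  · rw [show ((⟨0, by omega⟩ : Fin 2)) = 0 from rfl, dh_bas_apply_zero, mul_one, dh_bas_repr]
    fin_cases i <;> simp
  · rw [show ((⟨1, by omega⟩ : Fin 2)) = 1 from rfl, dh_bas_apply_one]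
    have : ((x : K) + y * sqm) * sqm = ((m * y : ℚ) : K) + (x : ℚ) * sqm := by
      push_cast; linear_combination (y : K) * hsq
    rw [this, dh_bas_repr]
    fin_cases i <;> simp

include hsq hdec hirr in
theorem dh_norm_formula (x y : ℚ) :
    Algebra.norm ℚ ((x : K) + y * sqm) = x ^ 2 - m * y ^ 2 := by
  rw [Algebra.norm_eq_matrix_det (dh_bas hdec hirr), dh_leftMulMatrix hsq hdec hirr,
    Matrix.det_fin_two_of]
  ring

include hsq hdec hirr in
theorem dh_trace_formula (x y : ℚ) :
    Algebra.trace ℚ K ((x : K) + y * sqm) = 2 * x := by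
  rw [Algebra.trace_eq_matrix_trace (dh_bas hdec hirr), dh_leftMulMatrix hsq hdec hirr,
    Matrix.trace_fin_two_of]
  ring

end DHAux

/-- Ramified odd prime case: with ξ = (a + b√m)/p, p ∣ a, p ∤ b, and π of norm ±p,
one finds γ, δ in the ring of integers with |N(ξγ − δ)| = 1/p. -/
theorem dh_ramified_case (m : ℤ) (hm : Squarefree m) (hmpos : 0 < m)
    (K : Type*) [Field K] [NumberField K] (sqm : K) (hsq : sqm ^ 2 = (m : K))
    (hgen : Algebra.adjoin ℚ {sqm} = ⊤)
    (p : ℕ) (hp : p.Prime) (hodd : Odd p) (hpm : (p : ℤ) ∣ m)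
    (π : NumberField.RingOfIntegers K)
    (hπ : |Algebra.norm ℚ (π : K)| = (p : ℚ))
    (a b : ℤ) (ha : (p : ℤ) ∣ a) (hb : ¬ (p : ℤ) ∣ b)
    (ξ : K) (hξ : ξ = ((a : K) + (b : K) * sqm) / (p : K)) :
    ∃ γ δ : NumberField.RingOfIntegers K,
      |Algebra.norm ℚ (ξ * (γ : K) - (δ : K))| = 1 / (p : ℚ) ∧
      0 < |Algebra.norm ℚ (ξ * (γ : K) - (δ : K))| ∧
      |Algebra.norm ℚ (ξ * (γ : K) - (δ : K))| < 1 := by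
  have hpZ : Prime (p : ℤ) := Nat.prime_iff_prime_int.mp hp
  have hp1 : 1 < (p : ℚ) := by exact_mod_cast hp.one_lt
  have hp0 : (0 : ℚ) < p := by positivity
  have hpQ : (p : ℚ) ≠ 0 := ne_of_gt hp0
  have hpK : (p : K) ≠ 0 := Nat.cast_ne_zero.mpr hp.ne_zero
  -- p² does not divide m
  have hp2m : ¬ ((p : ℤ) * p ∣ m) := fun hdd => hpZ.not_unit (hm _ hdd)
  -- irrationality of sqm
  have hirr : ∀ q : ℚ, (q : K) ≠ sqm := by
    intro q hqe
    have h1 : (q : K) ^ 2 = ((m : ℚ) : K) := by rw [hqe, hsq]; push_cast; ring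
    have h2 : (1 : ℚ) * q ^ 2 = (m : ℚ) := by
      rw [one_mul]
      exact_mod_cast h1
    obtain ⟨z, hz⟩ := dh_rat_int_of_sq squarefree_one q (by push_cast; linarith [h2])
    have hzm : z ^ 2 = m := by
      have : ((z : ℚ)) ^ 2 = (m : ℚ) := by rw [hz]; linarith [h2]
      exact_mod_cast this
    have hpz : (p : ℤ) ∣ z := hpZ.dvd_of_dvd_pow (n := 2) (hzm ▸ hpm)
    obtain ⟨w, hw⟩ := hpz
    exact hp2m ⟨w * w, by rw [← hzm, hw]; ring⟩
  have hdec : ∀ z : K, ∃ x y : ℚ, z = x + y * sqm := dh_dec hsq hgen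
  -- coordinates of π
  obtain ⟨x, y, hπxy⟩ := hdec (π : K)
  have hNform : Algebra.norm ℚ (π : K) = x ^ 2 - (m : ℚ) * y ^ 2 := by
    rw [hπxy]; exact dh_norm_formula hsq hdec hirr x y
  have habs : |x ^ 2 - (m : ℚ) * y ^ 2| = (p : ℚ) := by rw [← hNform]; exact hπ
  obtain ⟨e, he1, hNeq⟩ : ∃ e : ℤ, (e = 1 ∨ e = -1) ∧
      x ^ 2 - (m : ℚ) * y ^ 2 = (e : ℚ) * p := by
    rcases abs_cases (x ^ 2 - (m : ℚ) * y ^ 2) with ⟨h1, _⟩ | ⟨h1, _⟩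
    · exact ⟨1, Or.inl rfl, by rw [← habs, h1]; push_cast; ring⟩
    · exact ⟨-1, Or.inr rfl, by push_cast; linarith [habs, h1]⟩
  -- trace of π is an integer
  have htrv : Algebra.trace ℚ K (π : K) = 2 * x := by
    rw [hπxy]; exact dh_trace_formula hsq hdec hirr x y
  have htrint : IsIntegral ℤ (2 * x : ℚ) := by
    rw [← htrv]
    exact Algebra.isIntegral_trace (π.isIntegral_coe)
  obtain ⟨X, hX⟩ : ∃ X : ℤ, (X : ℚ) = 2 * x := IsIntegrallyClosed.isIntegral_iff.mp htrint
  obtain ⟨m₀, hm₀⟩ := hpm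
  have hpm₀ : ¬ ((p : ℤ) ∣ m₀) := fun ⟨w, hw⟩ => hp2m ⟨w, by rw [hm₀, hw]; ring⟩
  -- 2y is an integer
  have hY0 : (m : ℚ) * (2 * y) ^ 2 = ((X ^ 2 - 4 * e * p : ℤ) : ℚ) := by
    push_cast
    linear_combination (-(X : ℚ) - 2 * x) * hX - 4 * hNeq
  obtain ⟨Y, hY⟩ := dh_rat_int_of_sq hm (2 * y) hY0
  -- p divides X
  have hXsq : X ^ 2 = 4 * e * p + p * m₀ * Y ^ 2 := by
    have : ((X : ℚ)) ^ 2 = 4 * e * p + p * m₀ * (Y : ℚ) ^ 2 := by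
      push_cast
      rw [hX, hY]
      push_cast [hm₀] at hNeq ⊢
      linear_combination 4 * hNeq
    exact_mod_cast this
  obtain ⟨t, ht⟩ : (p : ℤ) ∣ X := by
    refine hpZ.dvd_of_dvd_pow (n := 2) ⟨4 * e + m₀ * Y ^ 2, by rw [hXsq]; ring⟩
  -- the key quadratic relation for π
  have hxtK : 2 * (x : K) = (p : K) * (t : K) := by
    have hq : 2 * x = ((p * t : ℤ) : ℚ) := by rw [← ht]; exact hX.symm
    have := congrArg (fun r : ℚ => (r : K)) hq
    push_cast at this ⊢
    exact this
  have hNK : (x : K) ^ 2 - (m : K) * (y : K) ^ 2 = (e : K) * (p : K) := by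
    have := congrArg (fun r : ℚ => (r : K)) hNeq
    push_cast at this ⊢
    exact this
  have hππ : (π : K) ^ 2 = (p : K) * ((t : K) * (π : K) - (e : K)) := by
    rw [hπxy]
    linear_combination (y : K) ^ 2 * hsq - hNK + ((x : K) + (y : K) * sqm) * hxtK
  -- sqm is integral
  have hsqmInt : IsIntegral ℤ sqm := by
    refine ⟨Polynomial.X ^ 2 - Polynomial.C m, Polynomial.monic_X_pow_sub_C m two_ne_zero, ?_⟩
    rw [Polynomial.eval₂_sub, Polynomial.eval₂_pow, Polynomial.eval₂_X, Polynomial.eval₂_C]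
    simp [hsq]
  -- the auxiliary element z = π * b * sqm / p
  set z : K := (π : K) * (b : K) * sqm / (p : K) with hzdef
  have hmK : (m : K) = (p : K) * (m₀ : K) := by exact_mod_cast congrArg (fun r : ℤ => (r : K)) hm₀
  set w : NumberField.RingOfIntegers K := ((t : NumberField.RingOfIntegers K) * π
      - (e : NumberField.RingOfIntegers K)) * (b : NumberField.RingOfIntegers K) ^ 2
      * (m₀ : NumberField.RingOfIntegers K) with hwdef
  have hwK : (algebraMap (NumberField.RingOfIntegers K) K) w
      = ((t : K) * (π : K) - (e : K)) * (b : K) ^ 2 * (m₀ : K) := by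
    simp [hwdef]
  have hz2 : z ^ 2 = (algebraMap (NumberField.RingOfIntegers K) K) w := by
    rw [hwK, hzdef]
    field_simp
    linear_combination ((b : K) ^ 2 * (m : K)) * hππ
      + ((p : K) * ((t : K) * (π : K) - (e : K)) * (b : K) ^ 2) * hmK
      + ((π : K) ^ 2 * (b : K) ^ 2) * hsq
  have hzInt : IsIntegral ℤ z := by
    have h1 : IsIntegral (NumberField.RingOfIntegers K) z := by
      refine ⟨Polynomial.X ^ 2 - Polynomial.C w,
        Polynomial.monic_X_pow_sub_C _ two_ne_zero, ?_⟩
      rw [Polynomial.eval₂_sub, Polynomial.eval₂_pow, Polynomial.eval₂_X, Polynomial.eval₂_C,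
        ← hz2, sub_self]
    exact isIntegral_trans z h1
  set τ : NumberField.RingOfIntegers K := ⟨z, hzInt⟩ with hτdef
  have hτval : (τ : K) = z := rfl
  -- coprimality
  have hpbm : ¬ ((p : ℤ) ∣ b ^ 2 * m₀) := by
    intro hdvd
    rcases hpZ.dvd_mul.mp hdvd with h | h
    · exact hb (hpZ.dvd_of_dvd_pow h)
    · exact hpm₀ h
  obtain ⟨u, v, huv⟩ : IsCoprime ((p : ℤ)) (b ^ 2 * m₀) :=
    hpZ.coprime_iff_not_dvd.mpr hpbm
  set k : ℤ := -u with hkdef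
  have hck : v * (b ^ 2 * m₀) = 1 + (p : ℤ) * k := by rw [hkdef]; linarith [huv]
  obtain ⟨a₀, ha₀⟩ := ha
  -- the two elements
  set γ : NumberField.RingOfIntegers K := (v : NumberField.RingOfIntegers K) * τ with hγdef
  set δ : NumberField.RingOfIntegers K := ((a₀ * v : ℤ) : NumberField.RingOfIntegers K) * τ
      + ((k : ℤ) : NumberField.RingOfIntegers K) * π with hδdef
  have hγK : (γ : K) = (v : K) * z := by
    rw [hγdef, NumberField.RingOfIntegers.coe_eq_algebraMap, map_mul, map_intCast]
    rfl
  have hδK : (δ : K) = ((a₀ : K) * (v : K)) * z + (k : K) * (π : K) := by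
    rw [hδdef, NumberField.RingOfIntegers.coe_eq_algebraMap, map_add, map_mul, map_mul,
      map_intCast, map_intCast]
    push_cast
    rfl
  have key : ξ * (γ : K) - (δ : K) = (π : K) / (p : K) := by
    rw [hγK, hδK, hzdef, hξ]
    have haK : (a : K) = (p : K) * (a₀ : K) := by exact_mod_cast congrArg (fun r : ℤ => (r : K)) ha₀
    have hckK : (v : K) * ((b : K) ^ 2 * (m₀ : K)) = 1 + (p : K) * (k : K) := by
      exact_mod_cast congrArg (fun r : ℤ => (r : K)) hck
    field_simp
    linear_combination ((v : K) * (b : K) * (π : K) * sqm) * haK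
      + ((v : K) * (b : K) ^ 2 * (π : K)) * hsq
      + ((v : K) * (b : K) ^ 2 * (π : K)) * hmK
      + ((p : K) * (π : K)) * hckK
  refine ⟨γ, δ, ?_, ?_, ?_⟩ <;>
  · rw [key]
    have hfrac : (π : K) / (p : K) = ((x / p : ℚ) : K) + ((y / p : ℚ) : K) * sqm := by
      rw [hπxy]; push_cast; ring
    rw [hfrac, dh_norm_formula hsq hdec hirr]
    have hval : (x / p) ^ 2 - (m : ℚ) * (y / p) ^ 2 = (e : ℚ) / p := by
      field_simp
      linear_combination hNeq
    rw [hval]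
    have heabs : |((e : ℚ)) / p| = 1 / p := by
      rcases he1 with rfl | rfl <;> rw [abs_div] <;> simp [abs_of_pos hp0]
    first
      | exact heabs
      | (rw [heabs]; positivity)
      | (rw [heabs, div_lt_one hp0]; exact hp1)
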